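/- In the ring A_{d,n} = Z[δ_S : S ⊆ N, |S| ≥ 2]/I_{d,n}, where N = {1,…,n} and I_{d,n} is generated by (i) δ_S δ_T = 0 whenever S ∩ T is nonempty and is a proper subset of both S and T, and (ii) (Σ_{a,b ∈ S} δ_S)^d = 0 for all pairs of distinct elements a,b ∈ N, the following holds: for any S ⊊ N with |S| ≥ 2, δ_S · δ_N^{d(n-|S|)} = 0. -/
import Mathlib


/-- In the Chow ring `A_{d,n} = ℤ[δ_S : S ⊆ N, |S| ≥ 2]/I_{d,n}` of `T_{d,n}`
(formalized universally: in any commutative ring with elements `δ S` satisfying the two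
defining relations), for any `S ⊊ N` with `|S| ≥ 2` one has
`δ_S · δ_N^{d(n-|S|)} = 0`. -/
theorem delta_deltaN_vanishing (d n : ℕ) (hd : 1 ≤ d) (hn : 2 ≤ n)
    {R : Type*} [CommRing R] (δ : Finset (Fin n) → R)
    (hrel1 : ∀ S T : Finset (Fin n), 2 ≤ S.card → 2 ≤ T.card →
      (S ∩ T).Nonempty → S ∩ T ⊂ S → S ∩ T ⊂ T → δ S * δ T = 0)
    (hrel2 : ∀ a b : Fin n, a ≠ b →
      (∑ S ∈ Finset.univ.filter (fun S : Finset (Fin n) => a ∈ S ∧ b ∈ S), δ S) ^ d = 0) :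
    ∀ S : Finset (Fin n), S ⊂ Finset.univ → 2 ≤ S.card →
      δ S * δ Finset.univ ^ (d * (n - S.card)) = 0 := by
  suffices h : ∀ m : ℕ, ∀ S : Finset (Fin n), S ⊂ Finset.univ → 2 ≤ S.card →
      n - S.card = m → δ S * δ Finset.univ ^ (d * m) = 0 by
    intro S h1 h2; exact h _ S h1 h2 rfl
  intro m
  induction m using Nat.strong_induction_on with
  | _ m IH =>
  intro S hS hcard hm
  -- pick a ∈ S and b ∉ S
  obtain ⟨a, ha⟩ : S.Nonempty := Finset.card_pos.mp (by omega)
  obtain ⟨b, -, hb⟩ := Finset.exists_of_ssubset hS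
  have hab : a ≠ b := fun h => hb (h ▸ ha)
  have hcardS : S.card < n := by
    have := Finset.card_lt_card hS
    simpa using this
  -- m ≥ 1, write m = m' + 1
  obtain ⟨m', rfl⟩ : ∃ m', m = m' + 1 := ⟨m - 1, by omega⟩
  set F : Finset (Finset (Fin n)) :=
    Finset.univ.filter (fun T : Finset (Fin n) => a ∈ T ∧ b ∈ T) with hF
  have huF : Finset.univ ∈ F := by simp [hF]
  set X : R := ∑ T ∈ F.erase Finset.univ, δ T with hX
  have hsum : ∑ T ∈ F, δ T = δ Finset.univ + X :=
    (Finset.add_sum_erase F δ huF).symm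
  -- Key vanishing: δ S * X * δ univ ^ (d * m') = 0
  have hA : δ S * X * δ Finset.univ ^ (d * m') = 0 := by
    rw [hX, Finset.mul_sum, Finset.sum_mul]
    apply Finset.sum_eq_zero
    intro T hT
    have hTne : T ≠ Finset.univ := (Finset.mem_erase.mp hT).1
    have hTmem := (Finset.mem_erase.mp hT).2
    rw [hF, Finset.mem_filter] at hTmem
    obtain ⟨-, haT, hbT⟩ := hTmem
    have hTcard : 2 ≤ T.card := Finset.one_lt_card.mpr ⟨a, haT, b, hbT, hab⟩
    by_cases hST : S ⊆ T
    · -- then S ⊊ T ⊊ univ, use the induction hypothesis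
      have hSsT : S ⊂ T := ⟨hST, fun h => hb (h hbT)⟩
      have hTu : T ⊂ Finset.univ := ⟨Finset.subset_univ T, fun h => hTne
        (Finset.eq_univ_of_forall (fun x => h (Finset.mem_univ x)))⟩
      have hTn : T.card < n := by simpa using Finset.card_lt_card hTu
      have hSTcard : S.card < T.card := Finset.card_lt_card hSsT
      have hlt : n - T.card < m' + 1 := by omega
      have hIH := IH (n - T.card) hlt T hTu hTcard rfl
      have hsplit : d * m' = d * (n - T.card) + (d * m' - d * (n - T.card)) := by
        have : d * (n - T.card) ≤ d * m' := Nat.mul_le_mul_left d (by omega)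
        omega
      rw [hsplit, pow_add]
      calc δ S * δ T * (δ Finset.univ ^ (d * (n - T.card)) *
              δ Finset.univ ^ (d * m' - d * (n - T.card)))
          = δ S * (δ T * δ Finset.univ ^ (d * (n - T.card))) *
              δ Finset.univ ^ (d * m' - d * (n - T.card)) := by ring
        _ = 0 := by rw [hIH]; ring
    · -- δ S * δ T = 0 by the first relation
      have h1 : (S ∩ T).Nonempty := ⟨a, Finset.mem_inter.mpr ⟨ha, haT⟩⟩
      have h2 : S ∩ T ⊂ S := ⟨Finset.inter_subset_left,
        fun h => hST fun x hx => (Finset.mem_inter.mp (h hx)).2⟩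
      have h3 : S ∩ T ⊂ T := ⟨Finset.inter_subset_right,
        fun h => hb (Finset.mem_inter.mp (h hbT)).1⟩
      rw [hrel1 S T hcard hTcard h1 h2 h3, zero_mul]
  -- Main computation
  have key : δ S * (δ Finset.univ + X) ^ d * δ Finset.univ ^ (d * m') = 0 := by
    rw [← hsum, hrel2 a b hab]; ring
  rw [add_pow, Finset.sum_range_succ] at key
  simp only [Nat.sub_self, pow_zero, Nat.choose_self, Nat.cast_one, mul_one] at key
  have hzero : ∀ k ∈ Finset.range d,
      δ S * (δ Finset.univ ^ k * X ^ (d - k) * (d.choose k : R)) *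
        δ Finset.univ ^ (d * m') = 0 := by
    intro k hk
    have hkd : k < d := Finset.mem_range.mp hk
    obtain ⟨e, he⟩ : ∃ e, d - k = e + 1 := ⟨d - k - 1, by omega⟩
    rw [he, pow_succ]
    calc δ S * (δ Finset.univ ^ k * (X ^ e * X) * (d.choose k : R)) *
            δ Finset.univ ^ (d * m')
        = δ S * X * δ Finset.univ ^ (d * m') *
            (δ Finset.univ ^ k * X ^ e * (d.choose k : R)) := by ring
      _ = 0 := by rw [hA]; ring
  rw [mul_add, add_mul, Finset.mul_sum, Finset.sum_mul, Finset.sum_eq_zero hzero,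
    zero_add] at key
  have : d * (m' + 1) = d + d * m' := by ring
  rw [this, pow_add]
  calc δ S * (δ Finset.univ ^ d * δ Finset.univ ^ (d * m'))
      = δ S * δ Finset.univ ^ d * δ Finset.univ ^ (d * m') := by ring
    _ = 0 := key
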